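/- Let Λ be a finitely aligned k-graph and K ⊆ Λ^0 a nonempty set of vertices such that (1) for every u ∈ K and every finite exhaustive set E ⊆ uΛ there exists α ∈ E with s(α) ∈ K, and (2) if u ∈ K and vΛu ≠ ∅ then v ∈ K. Then there exists a boundary path x ∈ ∂Λ such that x(n) ∈ K for every n ≤ d(x). -/

import Mathlib

/-- A `k`-graph: a countable category `Λ` with a degree functor `d : Λ → ℕ^k`
satisfying the factorisation property. Morphisms form the type `Mor`,
objects (vertices) the type `Obj`. -/
structure KGraph (k : ℕ) where
  Obj : Type
  Mor : Type
  countableObj : Countable Obj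
  countableMor : Countable Mor
  r : Mor → Obj
  s : Mor → Obj
  d : Mor → (Fin k → ℕ)
  id : Obj → Mor
  comp : ∀ μ ν : Mor, s μ = r ν → Mor
  r_id : ∀ v, r (id v) = v
  s_id : ∀ v, s (id v) = v
  d_id : ∀ v, d (id v) = 0
  r_comp : ∀ μ ν h, r (comp μ ν h) = r μ
  s_comp : ∀ μ ν h, s (comp μ ν h) = s ν
  d_comp : ∀ μ ν h, d (comp μ ν h) = d μ + d ν
  id_comp : ∀ μ : Mor, comp (id (r μ)) μ (s_id (r μ)) = μ
  comp_id : ∀ μ : Mor, comp μ (id (s μ)) ((r_id (s μ)).symm) = μ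
  assoc : ∀ (μ ν ρ : Mor) (h₁ : s μ = r ν) (h₂ : s ν = r ρ),
    comp (comp μ ν h₁) ρ ((s_comp μ ν h₁).trans h₂)
      = comp μ (comp ν ρ h₂) (h₁.trans (r_comp ν ρ h₂).symm)
  factor : ∀ (lam : Mor) (m n : Fin k → ℕ), d lam = m + n →
    ∃! p : {q : Mor × Mor // s q.1 = r q.2},
      d p.val.1 = m ∧ d p.val.2 = n ∧ lam = comp p.val.1 p.val.2 p.property

namespace KGraph

variable {k : ℕ} (Λ : KGraph k)

/-- `μ` is an initial segment of `lam`, i.e. `lam = μρ` for some `ρ`. -/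
def InitSeg (μ lam : Λ.Mor) : Prop :=
  ∃ (ρ : Λ.Mor) (h : Λ.s μ = Λ.r ρ), lam = Λ.comp μ ρ h

/-- The set of minimal common extensions of `μ` and `ν`. -/
def MCE (μ ν : Λ.Mor) : Set Λ.Mor :=
  {lam | Λ.d lam = Λ.d μ ⊔ Λ.d ν ∧ Λ.InitSeg μ lam ∧ Λ.InitSeg ν lam}

/-- `Λ` is finitely aligned if all `MCE` sets are finite. -/
def FinitelyAligned : Prop := ∀ μ ν : Λ.Mor, (Λ.MCE μ ν).Finite

/-- Aperiodicity: distinct paths with the same source admit a common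
extension `τ` with `MCE (ατ, βτ) = ∅`. -/
def Aperiodic : Prop :=
  ∀ α β : Λ.Mor, α ≠ β → Λ.s α = Λ.s β →
    ∃ (τ : Λ.Mor) (hα : Λ.s α = Λ.r τ) (hβ : Λ.s β = Λ.r τ),
      Λ.MCE (Λ.comp α τ hα) (Λ.comp β τ hβ) = ∅

/-- `E` is a finite exhaustive subset of `vΛ`. -/
def IsFE (v : Λ.Obj) (E : Set Λ.Mor) : Prop :=
  E.Finite ∧ (∀ α ∈ E, Λ.r α = v) ∧
    ∀ μ : Λ.Mor, Λ.r μ = v → ∃ lam ∈ E, (Λ.MCE μ lam).Nonempty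

/-- The segment `lam(p,q)` of a path `lam`, for `p ≤ q ≤ d lam`,
obtained from the factorisation property. -/
noncomputable def seg (lam : Λ.Mor) (p q : Fin k → ℕ) (hpq : p ≤ q) (hq : q ≤ Λ.d lam) :
    Λ.Mor := by
  have h1 : Λ.d lam = p + (Λ.d lam - p) := by
    funext i; exact (Nat.add_sub_cancel' ((hpq.trans hq) i)).symm
  have hspec := (Λ.factor lam p (Λ.d lam - p) h1).exists.choose_spec
  refine (Λ.factor ((Λ.factor lam p (Λ.d lam - p) h1).exists.choose).val.2
      (q - p) (Λ.d lam - q) ?_).exists.choose.val.1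
  rw [hspec.2.1]
  funext i
  have h3 : p i ≤ q i := hpq i
  have h4 : q i ≤ Λ.d lam i := hq i
  simp only [Pi.sub_apply, Pi.add_apply]
  omega

/-- A (possibly infinite) path in `Λ`: a degree-preserving functor from
`Ω_{k,m}` (for `m = deg ∈ (ℕ ∪ {∞})^k`) to `Λ`, recorded by its segments. -/
structure InfPath (Λ : KGraph k) where
  deg : Fin k → ℕ∞
  seg : ∀ p q : Fin k → ℕ, p ≤ q → (∀ i, (q i : ℕ∞) ≤ deg i) → Λ.Mor
  d_seg : ∀ p q hpq hq, Λ.d (seg p q hpq hq) = q - p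
  comp_seg : ∀ (p q r : Fin k → ℕ) (hpq : p ≤ q) (hqr : q ≤ r)
      (hq : ∀ i, (q i : ℕ∞) ≤ deg i) (hr : ∀ i, (r i : ℕ∞) ≤ deg i),
    ∃ h : Λ.s (seg p q hpq hq) = Λ.r (seg q r hqr hr),
      Λ.comp (seg p q hpq hq) (seg q r hqr hr) h = seg p r (hpq.trans hqr) hr

/-- The vertex `x(n)` of an infinite path. -/
def InfPath.vert {Λ : KGraph k} (x : Λ.InfPath) (n : Fin k → ℕ) (hn : ∀ i, (n i : ℕ∞) ≤ x.deg i) : Λ.Obj :=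
  Λ.r (x.seg n n le_rfl hn)

/-- The range `r(x) = x(0)` of an infinite path. -/
def InfPath.rng {Λ : KGraph k} (x : Λ.InfPath) : Λ.Obj :=
  Λ.r (x.seg 0 0 le_rfl (fun i => by simp))

/-- `x` is a boundary path: it hits every finite exhaustive set. -/
def IsBoundary (x : Λ.InfPath) : Prop :=
  ∀ (n : Fin k → ℕ) (hn : ∀ i, (n i : ℕ∞) ≤ x.deg i) (E : Set Λ.Mor),
    Λ.IsFE (x.vert n hn) E →
    ∃ (p : Fin k → ℕ) (hp : ∀ i, ((n + p) i : ℕ∞) ≤ x.deg i),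
      x.seg n (n + p) le_self_add hp ∈ E

/-- The set of boundary paths with range `v` is `v∂Λ`. -/

private lemma enat_aux {a b : ℕ} {D : ℕ∞} (h2 : (a : ℕ∞) ≤ D) (h1 : (b : ℕ∞) ≤ D - a) :
    ((a + b : ℕ) : ℕ∞) ≤ D := by
  cases D with
  | top => exact le_top
  | coe dN =>
    have ha : a ≤ dN := by exact_mod_cast h2
    rw [← ENat.coe_sub] at h1
    have hb : b ≤ dN - a := by exact_mod_cast h1
    exact_mod_cast (by omega : a + b ≤ dN)

/-- The shifted path `σ^m(x)`. -/
def InfPath.shift {Λ : KGraph k} (x : Λ.InfPath) (m : Fin k → ℕ) (hm : ∀ i, (m i : ℕ∞) ≤ x.deg i) :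
    Λ.InfPath where
  deg := fun i => x.deg i - (m i : ℕ∞)
  seg := fun p q hpq hq => x.seg (m + p) (m + q) (add_le_add_right hpq m)
    (fun i => by
      have := enat_aux (hm i) (hq i)
      simpa using this)
  d_seg := fun p q hpq hq => by
    rw [x.d_seg]
    funext i
    simp only [Pi.sub_apply, Pi.add_apply]
    omega
  comp_seg := fun p q r hpq hqr hq hr =>
    x.comp_seg (m + p) (m + q) (m + r) (add_le_add_right hpq m) (add_le_add_right hqr m) _ _

/-- `w = lam · z` : the path `w` extends `z` by the finite path `lam`,
i.e. `w(0, d lam) = lam` and `σ^{d lam}(w) = z`. -/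
def InfPath.ExtendsBy {Λ : KGraph k} (w z : Λ.InfPath) (lam : Λ.Mor) : Prop :=
  ∃ h : ∀ i, ((Λ.d lam) i : ℕ∞) ≤ w.deg i,
    w.seg 0 (Λ.d lam) zero_le h = lam ∧ w.shift (Λ.d lam) h = z

/-- Local periodicity `m, n` at `v`. -/
def LocalPeriodicity (m n : Fin k → ℕ) (v : Λ.Obj) : Prop :=
  ∀ x : Λ.InfPath, Λ.IsBoundary x → x.rng = v →
    (∀ i, (((m ⊔ n) i : ℕ) : ℕ∞) ≤ x.deg i) ∧
    ∃ (hm : ∀ i, (m i : ℕ∞) ≤ x.deg i) (hn : ∀ i, (n i : ℕ∞) ≤ x.deg i),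
      x.shift m hm = x.shift n hn

/-- Cofinality of `Λ`, stated in terms of finite paths. -/
def Cofinal : Prop :=
  ∀ v w : Λ.Obj, ∃ E : Set Λ.Mor, Λ.IsFE w E ∧
    ∀ α ∈ E, ∃ lam : Λ.Mor, Λ.r lam = v ∧ Λ.s lam = Λ.s α


/-! ### Auxiliary development for the boundary-path construction -/

section Aux

variable {k : ℕ} {Λ : KGraph k}

private lemma d_sub_add' {lam : Λ.Mor} {m : Fin k → ℕ} (hm : m ≤ Λ.d lam) :
    Λ.d lam = m + (Λ.d lam - m) :=
  funext fun i => (Nat.add_sub_cancel' (hm i)).symm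

/-- The chosen factorisation of `lam` at degree `m`. -/
noncomputable def split (lam : Λ.Mor) (m : Fin k → ℕ) (hm : m ≤ Λ.d lam) :
    {q : Λ.Mor × Λ.Mor // Λ.s q.1 = Λ.r q.2} :=
  (Λ.factor lam m (Λ.d lam - m) (d_sub_add' hm)).exists.choose

noncomputable def fstm (lam : Λ.Mor) (m : Fin k → ℕ) (hm : m ≤ Λ.d lam) : Λ.Mor :=
  (split lam m hm).val.1

noncomputable def sndm (lam : Λ.Mor) (m : Fin k → ℕ) (hm : m ≤ Λ.d lam) : Λ.Mor :=
  (split lam m hm).val.2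

lemma split_spec (lam : Λ.Mor) (m : Fin k → ℕ) (hm : m ≤ Λ.d lam) :
    Λ.d (fstm lam m hm) = m ∧ Λ.d (sndm lam m hm) = Λ.d lam - m ∧
      lam = Λ.comp (fstm lam m hm) (sndm lam m hm) (split lam m hm).property :=
  (Λ.factor lam m (Λ.d lam - m) (d_sub_add' hm)).exists.choose_spec

lemma d_fstm (lam : Λ.Mor) (m : Fin k → ℕ) (hm : m ≤ Λ.d lam) :
    Λ.d (fstm lam m hm) = m := (split_spec lam m hm).1

lemma d_sndm (lam : Λ.Mor) (m : Fin k → ℕ) (hm : m ≤ Λ.d lam) :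
    Λ.d (sndm lam m hm) = Λ.d lam - m := (split_spec lam m hm).2.1

lemma s_fstm (lam : Λ.Mor) (m : Fin k → ℕ) (hm : m ≤ Λ.d lam) :
    Λ.s (fstm lam m hm) = Λ.r (sndm lam m hm) := (split lam m hm).property

lemma comp_split (lam : Λ.Mor) (m : Fin k → ℕ) (hm : m ≤ Λ.d lam) :
    lam = Λ.comp (fstm lam m hm) (sndm lam m hm) (s_fstm lam m hm) :=
  (split_spec lam m hm).2.2

lemma r_fstm (lam : Λ.Mor) (m : Fin k → ℕ) (hm : m ≤ Λ.d lam) :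
    Λ.r (fstm lam m hm) = Λ.r lam := by
  conv_rhs => rw [comp_split lam m hm]
  rw [Λ.r_comp]

lemma s_sndm (lam : Λ.Mor) (m : Fin k → ℕ) (hm : m ≤ Λ.d lam) :
    Λ.s (sndm lam m hm) = Λ.s lam := by
  conv_rhs => rw [comp_split lam m hm]
  rw [Λ.s_comp]

/-- Uniqueness of the factorisation. -/
lemma split_unique {lam a b : Λ.Mor} (h : Λ.s a = Λ.r b) (hlam : lam = Λ.comp a b h)
    {m : Fin k → ℕ} (ha : Λ.d a = m) (hm : m ≤ Λ.d lam) :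
    fstm lam m hm = a ∧ sndm lam m hm = b := by
  have hb : Λ.d b = Λ.d lam - m := by
    funext i
    have : Λ.d lam = Λ.d a + Λ.d b := by rw [hlam, Λ.d_comp]
    have := congrFun this i
    have := congrFun ha i
    simp only [Pi.add_apply, Pi.sub_apply] at *
    omega
  have hu := (Λ.factor lam m (Λ.d lam - m) (d_sub_add' hm)).unique
    (y₁ := split lam m hm) (y₂ := ⟨(a, b), h⟩)
    (split_spec lam m hm) ⟨ha, hb, hlam⟩
  exact ⟨congrArg (fun p => p.val.1) hu, congrArg (fun p => p.val.2) hu⟩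

/-- Left cancellation. -/
lemma comp_cancel_left {μ a b : Λ.Mor} (h : Λ.s μ = Λ.r a) (h' : Λ.s μ = Λ.r b)
    (e : Λ.comp μ a h = Λ.comp μ b h') : a = b := by
  have hm : Λ.d μ ≤ Λ.d (Λ.comp μ a h) := by rw [Λ.d_comp]; exact le_add_of_nonneg_right (by positivity)
  have h1 := (split_unique h rfl (m := Λ.d μ) rfl hm).2
  have h2 := (split_unique h' e (m := Λ.d μ) rfl hm).2
  rw [← h1, ← h2]

end Aux
section Aux2

variable {k : ℕ} {Λ : KGraph k}

lemma fstm_congr {x y : Λ.Mor} (e : x = y) {m m' : Fin k → ℕ} (em : m = m')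
    (hm : m ≤ Λ.d x) : fstm x m hm = fstm y m' (em ▸ e ▸ hm) := by
  subst e; subst em; rfl

lemma sndm_congr {x y : Λ.Mor} (e : x = y) {m m' : Fin k → ℕ} (em : m = m')
    (hm : m ≤ Λ.d x) : sndm x m hm = sndm y m' (em ▸ e ▸ hm) := by
  subst e; subst em; rfl

lemma comp_congr_left {a a' b : Λ.Mor} (e : a = a') (h : Λ.s a = Λ.r b) :
    Λ.comp a b h = Λ.comp a' b (e ▸ h) := by subst e; rfl

lemma comp_congr_right {a b b' : Λ.Mor} (e : b = b') (h : Λ.s a = Λ.r b) :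
    Λ.comp a b h = Λ.comp a b' (e ▸ h) := by subst e; rfl

lemma le_d_comp {a b : Λ.Mor} (h : Λ.s a = Λ.r b) {m : Fin k → ℕ} (hm : m ≤ Λ.d a) :
    m ≤ Λ.d (Λ.comp a b h) := by
  rw [Λ.d_comp]; exact le_trans hm (le_add_of_nonneg_right (by positivity))

/-- Splitting a composite within the left factor. -/
lemma split_comp_left {a b : Λ.Mor} (h : Λ.s a = Λ.r b) {m : Fin k → ℕ} (hm : m ≤ Λ.d a) :
    fstm (Λ.comp a b h) m (le_d_comp h hm) = fstm a m hm ∧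
    sndm (Λ.comp a b h) m (le_d_comp h hm)
      = Λ.comp (sndm a m hm) b ((s_sndm a m hm).trans h) := by
  have e : Λ.comp a b h =
      Λ.comp (fstm a m hm) (Λ.comp (sndm a m hm) b ((s_sndm a m hm).trans h))
        ((s_fstm a m hm).trans (Λ.r_comp _ _ _).symm) := by
    rw [comp_congr_left (comp_split a m hm) h]
    exact Λ.assoc _ _ _ _ _
  exact split_unique _ e (d_fstm a m hm) _

/-- Splitting a composite beyond the left factor. -/
lemma split_comp_right {a b : Λ.Mor} (h : Λ.s a = Λ.r b) {m : Fin k → ℕ}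
    (ha : Λ.d a ≤ m) (hm : m ≤ Λ.d (Λ.comp a b h)) (hmb : m - Λ.d a ≤ Λ.d b) :
    (∃ hh : Λ.s a = Λ.r (fstm b (m - Λ.d a) hmb),
      fstm (Λ.comp a b h) m hm = Λ.comp a (fstm b (m - Λ.d a) hmb) hh) ∧
    sndm (Λ.comp a b h) m hm = sndm b (m - Λ.d a) hmb := by
  have hh : Λ.s a = Λ.r (fstm b (m - Λ.d a) hmb) := by rw [r_fstm]; exact h
  have e : Λ.comp a b h =
      Λ.comp (Λ.comp a (fstm b (m - Λ.d a) hmb) hh) (sndm b (m - Λ.d a) hmb)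
        ((Λ.s_comp _ _ _).trans (s_fstm b _ hmb)) := by
    rw [comp_congr_right (comp_split b (m - Λ.d a) hmb) h]
    exact (Λ.assoc _ _ _ _ _).symm
  have hd : Λ.d (Λ.comp a (fstm b (m - Λ.d a) hmb) hh) = m := by
    rw [Λ.d_comp, d_fstm]; funext i
    simp only [Pi.add_apply, Pi.sub_apply]; have h5 : Λ.d a i ≤ m i := ha i; omega
  have := split_unique _ e hd hm
  exact ⟨⟨hh, this.1⟩, this.2⟩

/-- The segment `lam(p,q)`. -/
noncomputable def seg' (lam : Λ.Mor) (p q : Fin k → ℕ) (hpq : p ≤ q) (hq : q ≤ Λ.d lam) :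
    Λ.Mor :=
  fstm (sndm lam p (hpq.trans hq)) (q - p) (by
    rw [d_sndm]; intro i; have := hpq i; have := hq i
    simp only [Pi.sub_apply] at *; omega)

lemma d_seg' (lam : Λ.Mor) (p q : Fin k → ℕ) (hpq : p ≤ q) (hq : q ≤ Λ.d lam) :
    Λ.d (seg' lam p q hpq hq) = q - p := d_fstm _ _ _

lemma r_seg'_self (lam : Λ.Mor) (p : Fin k → ℕ) (hp : p ≤ Λ.d lam) :
    Λ.r (seg' lam p p le_rfl hp) = Λ.r (sndm lam p hp) := r_fstm _ _ _

/-- Initial segments don't change segments. -/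
lemma seg'_comp {a b : Λ.Mor} (h : Λ.s a = Λ.r b) (p q : Fin k → ℕ) (hpq : p ≤ q)
    (hq : q ≤ Λ.d a) (hq' : q ≤ Λ.d (Λ.comp a b h)) :
    seg' (Λ.comp a b h) p q hpq hq' = seg' a p q hpq hq := by
  unfold seg'
  have hpa : p ≤ Λ.d a := hpq.trans hq
  have e1 : sndm (Λ.comp a b h) p (hpq.trans hq')
      = Λ.comp (sndm a p hpa) b ((s_sndm a p hpa).trans h) := (split_comp_left h hpa).2
  rw [fstm_congr e1 rfl]
  exact (split_comp_left ((s_sndm a p hpa).trans h) (m := q - p) (by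
    rw [d_sndm]; intro i; have := hpq i; have := hq i
    simp only [Pi.sub_apply] at *; omega)).1

end Aux2
section Aux3

variable {k : ℕ} {Λ : KGraph k}

lemma sub_le_d_sndm {lam : Λ.Mor} {p q : Fin k → ℕ} (hpq : p ≤ q) (hq : q ≤ Λ.d lam) :
    q - p ≤ Λ.d (sndm lam p (hpq.trans hq)) := by
  rw [d_sndm]; intro i; have h1 := hpq i; have h2 := hq i
  simp only [Pi.sub_apply] at *; omega

lemma sndm_sndm (lam : Λ.Mor) {p q : Fin k → ℕ} (hpq : p ≤ q) (hq : q ≤ Λ.d lam) :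
    sndm lam q hq = sndm (sndm lam p (hpq.trans hq)) (q - p) (sub_le_d_sndm hpq hq) := by
  have hp : p ≤ Λ.d lam := hpq.trans hq
  have e := comp_split lam p hp
  rw [sndm_congr e rfl hq]
  have h2 := (split_comp_right (s_fstm lam p hp) (m := q)
    (by rw [d_fstm]; exact hpq) (by rw [← e]; exact hq)
    (by rw [d_fstm]; exact sub_le_d_sndm hpq hq)).2
  rw [h2]
  exact (sndm_congr rfl (by rw [d_fstm]) _).symm

lemma exists_comp_eq {a b c b' : Λ.Mor} (eb : b' = b) (h : Λ.s a = Λ.r b')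
    (hc : Λ.comp a b' h = c) : ∃ h2 : Λ.s a = Λ.r b, Λ.comp a b h2 = c := by
  subst eb; exact ⟨h, hc⟩

/-- Segments compose. -/
lemma seg'_trans (lam : Λ.Mor) {p q r : Fin k → ℕ} (hpq : p ≤ q) (hqr : q ≤ r)
    (hr : r ≤ Λ.d lam) :
    ∃ h : Λ.s (seg' lam p q hpq (hqr.trans hr)) = Λ.r (seg' lam q r hqr hr),
      Λ.comp (seg' lam p q hpq (hqr.trans hr)) (seg' lam q r hqr hr) h
        = seg' lam p r (hpq.trans hqr) hr := by
  have hq : q ≤ Λ.d lam := hqr.trans hr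
  have hp : p ≤ Λ.d lam := hpq.trans hq
  set A := sndm lam p hp with hA
  -- seg' lam q r rewritten
  have e1 : seg' lam q r hqr hr
      = fstm (sndm A (q - p) (sub_le_d_sndm hpq hq)) (r - q) (by
          rw [← sndm_sndm lam hpq hq]; exact sub_le_d_sndm hqr hr) := by
    unfold seg'
    exact fstm_congr (sndm_sndm lam hpq hq) rfl _
  -- now use split_comp_right on A
  have eA := comp_split A (q - p) (sub_le_d_sndm hpq hq)
  have hra : r - p ≤ Λ.d A := sub_le_d_sndm (hpq.trans hqr) hr
  have h1 := (split_comp_right (s_fstm A (q - p) (sub_le_d_sndm hpq hq))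
    (m := r - p)
    (by rw [d_fstm]; intro i; have ha1 : p i ≤ q i := hpq i; have ha2 : q i ≤ r i := hqr i; simp only [Pi.sub_apply]; omega)
    (by rw [← eA]; exact hra)
    (by rw [d_fstm, d_sndm, d_sndm]; intro i
        have h1 := hpq i; have h2 := hqr i; have h3 := hr i
        simp only [Pi.sub_apply] at *; omega)).1
  obtain ⟨hh, h1⟩ := h1
  have e2 : seg' lam p r (hpq.trans hqr) hr = fstm A (r - p) hra := rfl
  have e3 : fstm A (r - p) hra
      = fstm (Λ.comp (fstm A (q - p) (sub_le_d_sndm hpq hq))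
          (sndm A (q - p) (sub_le_d_sndm hpq hq)) (s_fstm A _ _)) (r - p)
          (by rw [← eA]; exact hra) := fstm_congr eA rfl _
  rw [e3, h1] at e2
  -- degrees: (r-p) - d(fstm A (q-p)) = r - q
  have edeg : (r - p) - Λ.d (fstm A (q - p) (sub_le_d_sndm hpq hq)) = r - q := by
    rw [d_fstm]; funext i; have ha1 : p i ≤ q i := hpq i; have ha2 : q i ≤ r i := hqr i
    simp only [Pi.sub_apply]; omega
  refine exists_comp_eq ?_ hh e2.symm
  rw [e1]
  exact fstm_congr rfl edeg _

lemma initSeg_refl (lam : Λ.Mor) : Λ.InitSeg lam lam :=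
  ⟨Λ.id (Λ.s lam), (Λ.r_id _).symm, (Λ.comp_id lam).symm⟩

lemma initSeg_trans {a b c : Λ.Mor} (h1 : Λ.InitSeg a b) (h2 : Λ.InitSeg b c) :
    Λ.InitSeg a c := by
  obtain ⟨ρ, hρ, rfl⟩ := h1
  obtain ⟨σ, hσ, rfl⟩ := h2
  exact ⟨Λ.comp ρ σ ((Λ.s_comp _ _ _) ▸ hσ), hρ.trans (Λ.r_comp _ _ _).symm,
    Λ.assoc _ _ _ _ _⟩

lemma initSeg_d_le {a b : Λ.Mor} (h : Λ.InitSeg a b) : Λ.d a ≤ Λ.d b := by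
  obtain ⟨ρ, hρ, rfl⟩ := h
  rw [Λ.d_comp]; exact le_add_of_nonneg_right (by positivity)

/-- An initial segment stays an initial segment of any long enough `fstm`. -/
lemma initSeg_fstm {a τ : Λ.Mor} (h : Λ.InitSeg a τ) {m : Fin k → ℕ}
    (ham : Λ.d a ≤ m) (hm : m ≤ Λ.d τ) : Λ.InitSeg a (fstm τ m hm) := by
  obtain ⟨ρ, hρ, rfl⟩ := h
  have hmb : m - Λ.d a ≤ Λ.d ρ := by
    rw [Λ.d_comp] at hm; intro i
    have h1 : m i ≤ Λ.d a i + Λ.d ρ i := hm i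
    have h2 : Λ.d a i ≤ m i := ham i
    simp only [Pi.sub_apply]; omega
  obtain ⟨hh, e⟩ := (split_comp_right hρ ham hm hmb).1
  exact ⟨_, hh, e⟩

/-- Segments are stable under passing to extensions. -/
lemma seg'_of_initSeg {a b : Λ.Mor} (h : Λ.InitSeg a b) {p q : Fin k → ℕ} (hpq : p ≤ q)
    (hq : q ≤ Λ.d a) (hq' : q ≤ Λ.d b) :
    seg' b p q hpq hq' = seg' a p q hpq hq := by
  obtain ⟨ρ, hρ, rfl⟩ := h
  exact seg'_comp hρ p q hpq hq hq'

end Aux3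
section Aux4

variable {k : ℕ} {Λ : KGraph k}

/-- The set of extensions `ρ` of `μ` with `μρ` a minimal common extension of `μ`
and some element of `E`. -/
def ExtSet (μ : Λ.Mor) (E : Set Λ.Mor) : Set Λ.Mor :=
  {ρ | ∃ (h : Λ.s μ = Λ.r ρ) (α : Λ.Mor), α ∈ E ∧ Λ.comp μ ρ h ∈ Λ.MCE μ α}

lemma extSet_isFE (hFA : Λ.FinitelyAligned) (μ : Λ.Mor) {E : Set Λ.Mor}
    (hE : Λ.IsFE (Λ.r μ) E) : Λ.IsFE (Λ.s μ) (ExtSet μ E) := by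
  classical
  refine ⟨?_, ?_, ?_⟩
  · -- finiteness
    have himg : ((fun ρ => if h : Λ.s μ = Λ.r ρ then Λ.comp μ ρ h else ρ) '' ExtSet μ E).Finite := by
      apply Set.Finite.subset (Set.Finite.biUnion hE.1 (fun α _ => hFA μ α))
      rintro τ ⟨ρ, ⟨h, α, hα, hmce⟩, rfl⟩
      refine Set.mem_biUnion hα ?_
      simp only [dif_pos h]
      exact hmce
    refine Set.Finite.of_finite_image himg ?_
    rintro ρ ⟨h, α, hα, hmce⟩ ρ' ⟨h', α', hα', hmce'⟩ he
    simp only [dif_pos h, dif_pos h'] at he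
    exact comp_cancel_left h h' he
  · rintro ρ ⟨h, α, hα, hmce⟩
    exact h.symm
  · -- exhaustive
    intro ν hν
    have hν' : Λ.s μ = Λ.r ν := hν.symm
    obtain ⟨α, hα, τ, hτd, hτμν, hτα⟩ := hE.2.2 (Λ.comp μ ν hν') (Λ.r_comp _ _ _)
    have hμν : Λ.InitSeg μ (Λ.comp μ ν hν') := ⟨ν, hν', rfl⟩
    have hμτ : Λ.InitSeg μ τ := initSeg_trans hμν hτμν
    have hm : Λ.d μ ⊔ Λ.d α ≤ Λ.d τ := by
      intro i
      have e1 : Λ.d τ i = max (Λ.d μ i + Λ.d ν i) (Λ.d α i) := by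
        have := congrFun hτd i
        simpa [Λ.d_comp] using this
      simp only [Pi.sup_apply, e1, Pi.add_apply]
      omega
    set g := fstm τ (Λ.d μ ⊔ Λ.d α) hm with hg
    have hμg : Λ.InitSeg μ g := initSeg_fstm hμτ le_sup_left hm
    have hαg : Λ.InitSeg α g := initSeg_fstm hτα le_sup_right hm
    have hμg2 := hμg
    obtain ⟨ρ, hρ, hgρ⟩ := hμg2
    have hgmce : Λ.comp μ ρ hρ ∈ Λ.MCE μ α := by
      rw [← hgρ]
      exact ⟨d_fstm _ _ _, hμg, hαg⟩
    refine ⟨ρ, ⟨hρ, α, hα, hgmce⟩, ?_⟩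
    -- the common tail σ
    have hdμτ : Λ.d μ ≤ Λ.d τ := initSeg_d_le hμτ
    set σ := sndm τ (Λ.d μ) hdμτ with hσ
    have hνσ : Λ.InitSeg ν σ := by
      obtain ⟨τ₁, hτ₁, e⟩ := hτμν
      have e2 : τ = Λ.comp μ (Λ.comp ν τ₁ ((Λ.s_comp _ _ _) ▸ hτ₁))
          (hν'.trans (Λ.r_comp _ _ _).symm) := by
        rw [e]; exact Λ.assoc _ _ _ _ _
      have := (split_unique _ e2 rfl hdμτ).2
      exact ⟨τ₁, (Λ.s_comp _ _ _) ▸ hτ₁, this⟩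
    have hρσ : Λ.InitSeg ρ σ := by
      obtain ⟨g₂, hg₂, e⟩ := (⟨sndm τ (Λ.d μ ⊔ Λ.d α) hm, s_fstm τ _ hm,
          comp_split τ _ hm⟩ : Λ.InitSeg g τ)
      have e2 : τ = Λ.comp μ (Λ.comp ρ g₂ ((Λ.s_comp _ _ _) ▸ (hgρ ▸ hg₂)))
          (hρ.trans (Λ.r_comp _ _ _).symm) := by
        rw [e, comp_congr_left hgρ hg₂]; exact Λ.assoc _ _ _ _ _
      have := (split_unique _ e2 rfl hdμτ).2
      exact ⟨g₂, (Λ.s_comp _ _ _) ▸ (hgρ ▸ hg₂), this⟩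
    have hm2 : Λ.d ν ⊔ Λ.d ρ ≤ Λ.d σ :=
      sup_le (initSeg_d_le hνσ) (initSeg_d_le hρσ)
    exact ⟨fstm σ _ hm2, d_fstm _ _ _, initSeg_fstm hνσ le_sup_left hm2,
      initSeg_fstm hρσ le_sup_right hm2⟩

end Aux4
section Aux5

variable {k : ℕ} {Λ : KGraph k}

lemma exists_comp_eq2 {a a' b b' c c' : Λ.Mor} (ea : a' = a) (eb : b' = b) (ec : c' = c)
    (h : Λ.s a' = Λ.r b') (hc : Λ.comp a' b' h = c') :
    ∃ h2 : Λ.s a = Λ.r b, Λ.comp a b h2 = c := by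
  subst ea; subst eb; subst ec; exact ⟨h, hc⟩

/-- The one-step extension used in the inductive construction. -/
lemma exists_step (hFA : Λ.FinitelyAligned) {K : Set Λ.Obj}
    (h1 : ∀ u ∈ K, ∀ E : Set Λ.Mor, Λ.IsFE u E → ∃ α ∈ E, Λ.s α ∈ K)
    (lam : Λ.Mor) (hlam : Λ.s lam ∈ K) (n : Fin k → ℕ) (E : Set Λ.Mor) :
    ∃ lam' : Λ.Mor, Λ.s lam' ∈ K ∧ Λ.InitSeg lam lam' ∧
      ∀ hn : n ≤ Λ.d lam, Λ.IsFE (Λ.r (sndm lam n hn)) E →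
        ∃ α ∈ E, ∃ hd : n + Λ.d α ≤ Λ.d lam',
          seg' lam' n (n + Λ.d α) le_self_add hd = α := by
  classical
  by_cases hc : ∃ hn : n ≤ Λ.d lam, Λ.IsFE (Λ.r (sndm lam n hn)) E
  swap
  · exact ⟨lam, hlam, initSeg_refl lam, fun hn hFE => absurd ⟨hn, hFE⟩ hc⟩
  obtain ⟨hn, hFE⟩ := hc
  set μ := sndm lam n hn with hμ
  have hsμ : Λ.s μ ∈ K := by rw [hμ, s_sndm]; exact hlam
  obtain ⟨ρ, hρE, hρK⟩ := h1 (Λ.s μ) hsμ (ExtSet μ E) (extSet_isFE hFA μ hFE)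
  obtain ⟨hρ, α, hαE, hmce⟩ := hρE
  have hlr : Λ.s lam = Λ.r ρ := by rw [← s_sndm lam n hn]; exact hρ
  refine ⟨Λ.comp lam ρ hlr, by rw [Λ.s_comp]; exact hρK, ⟨ρ, hlr, rfl⟩, ?_⟩
  intro hn' hFE'
  obtain ⟨σ, hσ, eσ⟩ := hmce.2.2
  -- degree bound
  have hdlam : Λ.d lam = n + Λ.d μ := by
    rw [hμ, d_sndm]; funext i
    have h5 : n i ≤ Λ.d lam i := hn i
    simp only [Pi.add_apply, Pi.sub_apply]; omega
  have hdsup := hmce.1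
  have hd : n + Λ.d α ≤ Λ.d (Λ.comp lam ρ hlr) := by
    intro i
    have e1 := congrFun hdsup i
    have e2 := congrFun hdlam i
    simp only [Λ.d_comp, Pi.add_apply, Pi.sup_apply] at *
    omega
  refine ⟨α, hαE, hd, ?_⟩
  -- identify the segment
  have hnd : n ≤ Λ.d (Λ.comp lam ρ hlr) := le_trans le_self_add hd
  have e1 : Λ.comp lam ρ hlr
      = Λ.comp (fstm lam n hn) (Λ.comp μ ρ hρ)
          ((s_fstm lam n hn).trans (Λ.r_comp _ _ _).symm) := by
    rw [comp_congr_left (comp_split lam n hn) hlr]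
    exact Λ.assoc _ _ _ _ _
  have e2 := e1.trans (comp_congr_right eσ
      ((s_fstm lam n hn).trans (Λ.r_comp _ _ _).symm))
  have hsnd : sndm (Λ.comp lam ρ hlr) n hnd = Λ.comp α σ hσ :=
    (split_unique _ e2 (d_fstm lam n hn) hnd).2
  have edeg : (n + Λ.d α) - n = Λ.d α := by
    funext i; simp only [Pi.sub_apply, Pi.add_apply]; omega
  show fstm (sndm (Λ.comp lam ρ hlr) n _) ((n + Λ.d α) - n) _ = α
  rw [fstm_congr hsnd edeg]
  exact (split_unique hσ rfl rfl (by
    rw [Λ.d_comp]; exact le_add_of_nonneg_right (by positivity))).1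

end Aux5
/-- If `K ⊆ Λ^0` is nonempty, every finite exhaustive set at a vertex of
`K` has an element with source in `K`, and `K` is closed under taking
ranges of paths with source in `K`, then there is a boundary path lying
entirely in `K`. -/
theorem exists_boundary_path_in_K (hFA : Λ.FinitelyAligned)
    (K : Set Λ.Obj) (hne : K.Nonempty)
    (h1 : ∀ u ∈ K, ∀ E : Set Λ.Mor, Λ.IsFE u E → ∃ α ∈ E, Λ.s α ∈ K)
    (h2 : ∀ lam : Λ.Mor, Λ.s lam ∈ K → Λ.r lam ∈ K) :
    ∃ x : Λ.InfPath, Λ.IsBoundary x ∧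
      ∀ (n : Fin k → ℕ) (hn : ∀ i, (n i : ℕ∞) ≤ x.deg i), x.vert n hn ∈ K := by
  classical
  obtain ⟨v0, hv0⟩ := hne
  haveI : Countable Λ.Mor := Λ.countableMor
  obtain ⟨F0, hF0⟩ := exists_surjective_nat ((Fin k → ℕ) × Finset Λ.Mor)
  set F : ℕ → (Fin k → ℕ) × Finset Λ.Mor := fun j => F0 (Nat.unpair j).2 with hFdef
  have hFhit : ∀ (t : (Fin k → ℕ) × Finset Λ.Mor) (j0 : ℕ), ∃ j, j0 ≤ j ∧ F j = t := by
    intro t j0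
    obtain ⟨m, hm⟩ := hF0 t
    exact ⟨Nat.pair j0 m, Nat.left_le_pair _ _, by simp [hFdef, Nat.unpair_pair, hm]⟩
  choose step hstep using fun lam hlam n E => exists_step hFA h1 lam hlam n E
  let L : ℕ → {m : Λ.Mor // Λ.s m ∈ K} := fun j => Nat.rec
    ⟨Λ.id v0, by rw [Λ.s_id]; exact hv0⟩
    (fun j p => ⟨step p.1 p.2 (F j).1 ↑(F j).2, (hstep p.1 p.2 (F j).1 ↑(F j).2).1⟩) j
  let LL : ℕ → Λ.Mor := fun j => (L j).1
  have hLK : ∀ j, Λ.s (LL j) ∈ K := fun j => (L j).2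
  have hchain : ∀ {a b : ℕ}, a ≤ b → Λ.InitSeg (LL a) (LL b) := by
    intro a b h
    induction b, h using Nat.le_induction with
    | base => exact initSeg_refl _
    | succ n hn ih =>
      exact initSeg_trans ih ((hstep (LL n) (hLK n) (F n).1 ↑(F n).2).2.1)
  have hmono : ∀ {a b : ℕ}, a ≤ b → Λ.d (LL a) ≤ Λ.d (LL b) :=
    fun h => initSeg_d_le (hchain h)
  set deg : Fin k → ℕ∞ := fun i => ⨆ j, (Λ.d (LL j) i : ℕ∞) with hdeg
  have hle_deg : ∀ j i, (Λ.d (LL j) i : ℕ∞) ≤ deg i := fun j i => by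
    simp only [hdeg]
    exact le_iSup (fun j' => ((Λ.d (LL j') i : ℕ∞))) j
  have hex : ∀ q : Fin k → ℕ, (∀ i, (q i : ℕ∞) ≤ deg i) → ∃ j, q ≤ Λ.d (LL j) := by
    intro q hq
    have hi : ∀ i, ∃ j, q i ≤ Λ.d (LL j) i := by
      intro i
      by_contra hcon
      push_neg at hcon
      have hq1 : 1 ≤ q i := lt_of_le_of_lt (Nat.zero_le _) (hcon 0)
      have hd1 : deg i ≤ ((q i - 1 : ℕ) : ℕ∞) := by
        simp only [hdeg]
        exact iSup_le fun j => by exact_mod_cast Nat.le_sub_one_of_lt (hcon j)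
      have hd2 := le_trans (hq i) hd1
      have hd3 : q i ≤ q i - 1 := by exact_mod_cast hd2
      omega
    choose ji hji using hi
    exact ⟨Finset.univ.sup ji, fun i =>
      le_trans (hji i) (hmono (Finset.le_sup (Finset.mem_univ i)) i)⟩
  have hsame : ∀ (j j' : ℕ) (p q : Fin k → ℕ) (hpq : p ≤ q) (hj : q ≤ Λ.d (LL j))
      (hj' : q ≤ Λ.d (LL j')),
      seg' (LL j) p q hpq hj = seg' (LL j') p q hpq hj' := by
    intro j j' p q hpq hj hj'
    rcases le_total j j' with h | h
    · exact (seg'_of_initSeg (hchain h) hpq hj hj').symm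
    · exact seg'_of_initSeg (hchain h) hpq hj' hj
  let x : Λ.InfPath :=
    { deg := deg
      seg := fun p q hpq hq => seg' (LL (hex q hq).choose) p q hpq (hex q hq).choose_spec
      d_seg := fun p q hpq hq => d_seg' _ _ _ _ _
      comp_seg := by
        intro p q r hpq hqr hq hr
        have hj := (hex r hr).choose_spec
        have hqj : q ≤ Λ.d (LL (hex r hr).choose) := hqr.trans hj
        obtain ⟨hcomp, e⟩ := seg'_trans (LL (hex r hr).choose) hpq hqr hj
        exact exists_comp_eq2
          (hsame _ _ p q hpq hqj (hex q hq).choose_spec)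
          (hsame _ _ q r hqr hj (hex r hr).choose_spec)
          (hsame _ _ p r (hpq.trans hqr) hj (hex r hr).choose_spec) hcomp e }
  have hvert : ∀ (n : Fin k → ℕ) (hn : ∀ i, (n i : ℕ∞) ≤ x.deg i),
      x.vert n hn = Λ.r (sndm (LL ((hex n hn).choose)) n (hex n hn).choose_spec) :=
    fun n hn => r_seg'_self _ _ _
  refine ⟨x, ?_, ?_⟩
  · -- boundary property
    intro n hn E hE
    set j0 := (hex n hn).choose with hj0
    obtain ⟨j, hj0le, hFj⟩ := hFhit (n, hE.1.toFinset) j0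
    have hnj : n ≤ Λ.d (LL j) := le_trans (hex n hn).choose_spec (hmono hj0le)
    have hreq := (hstep (LL j) (hLK j) (F j).1 ↑(F j).2).2.2
    have hFj1 : (F j).1 = n := by rw [hFj]
    have hFj2 : ((F j).2 : Set Λ.Mor) = E := by rw [hFj]; exact hE.1.coe_toFinset
    rw [hFj1, hFj2] at hreq
    have hstepEq : step (LL j) (hLK j) n E = LL (j + 1) := by
      show step (LL j) (hLK j) n E = step (LL j) (hLK j) (F j).1 ↑(F j).2
      rw [hFj1, hFj2]
    rw [hstepEq] at hreq
    have hvv : Λ.r (sndm (LL j) n hnj) = x.vert n hn := by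
      rw [hvert n hn, ← r_seg'_self (LL j) n hnj, ← r_seg'_self (LL j0) n _,
        hsame j j0 n n le_rfl hnj (hex n hn).choose_spec]
    obtain ⟨α, hαE, hd, hseg⟩ := hreq hnj (hvv ▸ hE)
    have hp : ∀ i, (((n + Λ.d α) i : ℕ) : ℕ∞) ≤ x.deg i := by
      intro i
      refine le_trans ?_ (hle_deg (j + 1) i)
      exact_mod_cast hd i
    refine ⟨Λ.d α, hp, ?_⟩
    show seg' (LL ((hex (n + Λ.d α) hp).choose)) n (n + Λ.d α) le_self_add
      (hex (n + Λ.d α) hp).choose_spec ∈ E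
    rw [hsame _ (j + 1) n (n + Λ.d α) le_self_add (hex (n + Λ.d α) hp).choose_spec hd,
      hseg]
    exact hαE
  · -- lies in K
    intro n hn
    rw [hvert n hn]
    exact h2 _ (by rw [s_sndm]; exact hLK _)

end KGraph
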